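/- The 3-dimensional cube graph Q_3 has no spanning tree with more than 4 leaves. -/

import Mathlib

/-- `T` is a spanning tree of `G`: a subgraph on all vertices that is a tree. -/
def IsSpanningTreeOf {V : Type*} (T G : SimpleGraph V) : Prop := T ≤ G ∧ T.IsTree

/-- The set of leaves (vertices of degree 1) of a graph. -/
def leafSet {V : Type*} (T : SimpleGraph V) : Set V := {v | (T.neighborSet v).ncard = 1}

/-- The number of leaves of a graph. -/
noncomputable def numLeaves {V : Type*} (T : SimpleGraph V) : ℕ := (leafSet T).ncard

/-- The 3-dimensional cube graph `Q_3` on the vertex set `{0,1}^3`: two vertices are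
adjacent iff they differ in exactly one coordinate. -/
def cubeQ3 : SimpleGraph (Fin 3 → Bool) :=
  SimpleGraph.fromRel (fun v w => (Finset.univ.filter fun i => v i ≠ w i).card = 1)

instance cubeDec : DecidableRel cubeQ3.Adj := fun a b =>
  decidable_of_iff (a ≠ b ∧ ((Finset.univ.filter fun i => a i ≠ b i).card = 1 ∨
    (Finset.univ.filter fun i => b i ≠ a i).card = 1)) Iff.rfl

lemma cube_degree : ∀ v, cubeQ3.degree v = 3 := by decide

set_option synthInstance.maxSize 2000 in
set_option maxHeartbeats 2000000 in
lemma triple_lemma : ∀ a b c : Fin 3 → Bool, a ≠ b → a ≠ c → b ≠ c →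
    ∃ d, d ≠ a ∧ d ≠ b ∧ d ≠ c ∧
      ((cubeQ3.Adj a d ∧ cubeQ3.Adj b d) ∨ (cubeQ3.Adj a d ∧ cubeQ3.Adj c d) ∨
       (cubeQ3.Adj b d ∧ cubeQ3.Adj c d)) := by decide

/-- The cube `Q_3` has no spanning tree with more than 4 leaves. -/
theorem cube_leaves_le_four (T : SimpleGraph (Fin 3 → Bool))
    (hT : IsSpanningTreeOf T cubeQ3) : numLeaves T ≤ 4 := by
  classical
  obtain ⟨hle, htree⟩ := hT
  -- edge count = 7
  have hcard : T.edgeFinset.card + 1 = Fintype.card (Fin 3 → Bool) := htree.card_edgeFinset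
  have hV : Fintype.card (Fin 3 → Bool) = 8 := by simp
  have hE : T.edgeFinset.card = 7 := by omega
  have hsum : ∑ v, T.degree v = 14 := by
    rw [SimpleGraph.sum_degrees_eq_twice_card_edges, hE]
  -- degrees at most 3
  have hnsub : ∀ v, T.neighborFinset v ⊆ cubeQ3.neighborFinset v := by
    intro v w hw
    rw [SimpleGraph.mem_neighborFinset] at *
    exact hle hw
  have hdeg3 : ∀ v, T.degree v ≤ 3 := fun v => by
    have h2 := Finset.card_le_card (hnsub v)
    rwa [SimpleGraph.card_neighborFinset_eq_degree,
      SimpleGraph.card_neighborFinset_eq_degree, cube_degree v] at h2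
  set L : Finset (Fin 3 → Bool) := Finset.univ.filter (fun v => T.degree v = 1) with hLdef
  set S : Finset (Fin 3 → Bool) := Finset.univ.filter (fun v => ¬ T.degree v = 1) with hSdef
  have hnum : numLeaves T = L.card := by
    have hset : leafSet T = ↑L := by
      ext v
      have hncard : (T.neighborSet v).ncard = T.degree v := by
        rw [Set.ncard_eq_toFinset_card', ← SimpleGraph.neighborFinset_def,
          SimpleGraph.card_neighborFinset_eq_degree]
      simp only [leafSet, Set.mem_setOf_eq, hLdef, Finset.coe_filter, Finset.mem_univ,
        true_and, Set.mem_setOf_eq, hncard]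
    rw [numLeaves, hset, Set.ncard_coe_finset]
  rw [hnum]
  by_contra hcon
  push_neg at hcon
  have hL5 : 5 ≤ L.card := hcon
  have hsplit : ∑ v ∈ L, T.degree v + ∑ v ∈ S, T.degree v = 14 := by
    rw [hLdef, hSdef, Finset.sum_filter_add_sum_filter_not, hsum]
  have hsumL : ∑ v ∈ L, T.degree v = L.card := by
    rw [Finset.sum_congr rfl (fun v hv => (Finset.mem_filter.mp hv).2)]
    simp [hLdef]
  have hcards : L.card + S.card = 8 := by
    rw [hLdef, hSdef, Finset.card_filter_add_card_filter_not, Finset.card_univ, hV]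
  have hsumS_le : ∑ v ∈ S, T.degree v ≤ 3 * S.card := by
    calc ∑ v ∈ S, T.degree v ≤ ∑ _v ∈ S, 3 := Finset.sum_le_sum (fun v _ => hdeg3 v)
    _ = 3 * S.card := by rw [Finset.sum_const, smul_eq_mul, mul_comm]
  have hS3 : S.card = 3 := by omega
  have hx9 : ∑ v ∈ S, T.degree v = 9 := by omega
  have hdegS : ∀ v ∈ S, T.degree v = 3 := by
    by_contra h
    push_neg at h
    obtain ⟨v, hvS, hv3⟩ := h
    have hlt : T.degree v < 3 := lt_of_le_of_ne (hdeg3 v) hv3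
    have hslt : ∑ v ∈ S, T.degree v < ∑ _v ∈ S, 3 :=
      Finset.sum_lt_sum (fun i _ => hdeg3 i) ⟨v, hvS, hlt⟩
    rw [Finset.sum_const, smul_eq_mul, hS3] at hslt
    omega
  obtain ⟨a, b, c, hab, hac, hbc, hSeq⟩ := Finset.card_eq_three.mp hS3
  have hfull : ∀ v ∈ S, ∀ w, cubeQ3.Adj v w → T.Adj v w := by
    intro v hv w hw
    have heq : T.neighborFinset v = cubeQ3.neighborFinset v := by
      apply Finset.eq_of_subset_of_card_le (hnsub v)
      rw [SimpleGraph.card_neighborFinset_eq_degree,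
        SimpleGraph.card_neighborFinset_eq_degree, cube_degree, hdegS v hv]
    have hm : w ∈ T.neighborFinset v := by
      rw [heq, SimpleGraph.mem_neighborFinset]; exact hw
    rwa [SimpleGraph.mem_neighborFinset] at hm
  obtain ⟨d, hda, hdb, hdc, hcase⟩ := triple_lemma a b c hab hac hbc
  have hdL : T.degree d = 1 := by
    have hdS : d ∉ S := by rw [hSeq]; simp [hda, hdb, hdc]
    rw [hSdef, Finset.mem_filter] at hdS
    push_neg at hdS
    exact hdS (Finset.mem_univ d)
  have haS : a ∈ S := by rw [hSeq]; simp
  have hbS : b ∈ S := by rw [hSeq]; simp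
  have hcS : c ∈ S := by rw [hSeq]; simp
  have key : ∀ x y, x ≠ y → T.Adj d x → T.Adj d y → False := by
    intro x y hxy hx hy
    have hsub2 : ({x, y} : Finset _) ⊆ T.neighborFinset d := by
      intro z hz
      simp only [Finset.mem_insert, Finset.mem_singleton] at hz
      rcases hz with rfl | rfl <;> rwa [SimpleGraph.mem_neighborFinset]
    have h2 := Finset.card_le_card hsub2
    rw [Finset.card_pair hxy, SimpleGraph.card_neighborFinset_eq_degree, hdL] at h2
    omega
  rcases hcase with ⟨h1, h2⟩ | ⟨h1, h2⟩ | ⟨h1, h2⟩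
  · exact key a b hab ((hfull a haS d h1).symm) ((hfull b hbS d h2).symm)
  · exact key a c hac ((hfull a haS d h1).symm) ((hfull c hcS d h2).symm)
  · exact key b c hbc ((hfull b hbS d h1).symm) ((hfull c hcS d h2).symm)
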